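/- For d ≥ 0 let b(d) be the number of closed Mockingbird terms of degree d that are minimal elements for ≼ (i.e., the only term t' with t' ⇒ t is t itself). Then b(0) = 1, b(1) = 1, and for all d ≥ 2, b(d) = Σ_{i=0}^{d−1} b(i)·b(d−1−i) − c(d), where c(d) = b((d−1)/2) if d is odd and c(d) = 0 if d is even. -/

import Mathlib

/-- Mockingbird terms: the constant `M`, variables `x i`, and applications. -/
inductive MTerm : Type
  | M : MTerm
  | var : ℕ → MTerm
  | app : MTerm → MTerm → MTerm
  deriving DecidableEq

/-- The one-step rewrite relation `⇒` on Mockingbird terms. -/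
inductive Step : MTerm → MTerm → Prop
  | mock (t : MTerm) : Step (MTerm.app MTerm.M t) (MTerm.app t t)
  | left {t1 t1' : MTerm} (t2 : MTerm) :
      Step t1 t1' → Step (MTerm.app t1 t2) (MTerm.app t1' t2)
  | right (t1 : MTerm) {t2 t2' : MTerm} :
      Step t2 t2' → Step (MTerm.app t1 t2) (MTerm.app t1 t2')

/-- `≼`, the reflexive-transitive closure of `⇒`. -/
def MLe : MTerm → MTerm → Prop := Relation.ReflTransGen Step

/-- `≡`, the reflexive-symmetric-transitive closure of `⇒`. -/
def MEquiv : MTerm → MTerm → Prop := Relation.EqvGen Step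

/-- Strict version of `≼`. -/
def MLt (s t : MTerm) : Prop := MLe s t ∧ s ≠ t

/-- Covering relation for `≼`. -/
def MCovBy (s t : MTerm) : Prop := MLt s t ∧ ∀ z, MLt s z → ¬ MLt z t

/-- Duplicative trees: white or black nodes with a list (forest) of children. -/
inductive DTree : Type
  | W : List DTree → DTree
  | B : List DTree → DTree

/-- The one-step relation `⋖` on duplicative forests. -/
inductive DStep : List DTree → List DTree → Prop
  | dup (g : List DTree) : DStep [DTree.W g] [DTree.B (g ++ g)]
  | white {g g' : List DTree} : DStep g g' → DStep [DTree.W g] [DTree.W g']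
  | black {g g' : List DTree} : DStep g g' → DStep [DTree.B g] [DTree.B g']
  | head {t t' : DTree} (f : List DTree) : DStep [t] [t'] → DStep (t :: f) (t' :: f)
  | tail (t : DTree) {f f' : List DTree} : DStep f f' → DStep (t :: f) (t :: f')

/-- `≪`, the reflexive-transitive closure of `⋖`. -/
def DLe : List DTree → List DTree → Prop := Relation.ReflTransGen DStep

/-- The map `fr` from Mockingbird terms to duplicative forests. -/
def fr : MTerm → List DTree
  | MTerm.M => []
  | MTerm.var _ => []
  | MTerm.app MTerm.M MTerm.M => [DTree.B []]
  | MTerm.app MTerm.M t' => [DTree.W (fr t')]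
  | MTerm.app t t' => [DTree.B (fr t ++ fr t')]

mutual
  /-- The pruning map on duplicative trees (returns a forest). -/
  def prT : DTree → List DTree
    | DTree.W g => [DTree.W (prF g)]
    | DTree.B g => prF g
  /-- The pruning map on duplicative forests. -/
  def prF : List DTree → List DTree
    | [] => []
    | t :: f => prT t ++ prF f
end

mutual
  /-- The statistic `mtStat` on duplicative trees. -/
  def mtStat : DTree → ℕ
    | DTree.W g => 2 * ml g
    | DTree.B g => ml g
  /-- Sum of `mtStat` over the trees of a forest. -/
  def mtsum : List DTree → ℕ
    | [] => 0
    | t :: f => mtStat t + mtsum f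
  /-- The statistic `ml` on duplicative forests: `1 - ℓ + Σ mtStat`. -/
  def ml : List DTree → ℕ
    | f => mtsum f + 1 - f.length
end

mutual
  /-- Number of white nodes in a duplicative tree. -/
  def whitesT : DTree → ℕ
    | DTree.W g => 1 + whitesF g
    | DTree.B g => whitesF g
  /-- Number of white nodes in a duplicative forest. -/
  def whitesF : List DTree → ℕ
    | [] => 0
    | t :: f => whitesT t + whitesF f
end

/-- Closed terms: no variables. -/
def MClosed : MTerm → Prop
  | MTerm.M => True
  | MTerm.var _ => False
  | MTerm.app a b => MClosed a ∧ MClosed b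

/-- Degree: number of applications. -/
def deg : MTerm → ℕ
  | MTerm.M => 0
  | MTerm.var _ => 0
  | MTerm.app a b => deg a + deg b + 1

/-- Subterm relation. -/
inductive Subterm : MTerm → MTerm → Prop
  | refl (t : MTerm) : Subterm t t
  | left {s a : MTerm} (b : MTerm) : Subterm s a → Subterm s (MTerm.app a b)
  | right (a : MTerm) {s b : MTerm} : Subterm s b → Subterm s (MTerm.app a b)

/-- The term `r_d`. -/
def rTerm : ℕ → MTerm
  | 0 => MTerm.M
  | d + 1 => MTerm.app MTerm.M (rTerm d)

/-- Saturated chain from `a` to `b`, given as the list of its elements. -/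
def SatChain (a b : MTerm) (c : List MTerm) : Prop :=
  List.Chain' MCovBy c ∧ c.head? = some a ∧ c.getLast? = some b

/-- decidable "closed and minimal" predicate -/
def good : MTerm → Bool
  | MTerm.M => true
  | MTerm.var _ => false
  | MTerm.app a b => good a && good b && decide (a = b → a = MTerm.M)

theorem good_closed {t : MTerm} (h : good t = true) : MClosed t := by
  induction t with
  | M => trivial
  | var n => simp [good] at h
  | app a b iha ihb =>
    simp only [good, Bool.and_eq_true] at h
    exact ⟨iha h.1.1, ihb h.1.2⟩

theorem good_min {t' t : MTerm} (h : Step t' t) (hg : good t = true) : t' = t := by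
  induction h with
  | mock s =>
    simp only [good, Bool.and_eq_true, decide_eq_true_eq] at hg
    have : s = MTerm.M := by tauto
    rw [this]
  | left t2 h ih =>
    simp only [good, Bool.and_eq_true] at hg
    rw [ih hg.1.1]
  | right t1 h ih =>
    simp only [good, Bool.and_eq_true] at hg
    rw [ih hg.1.2]

theorem notgood_step {t : MTerm} (hc : MClosed t) (h : good t = false) :
    ∃ t', Step t' t ∧ t' ≠ t := by
  induction t with
  | M => simp [good] at h
  | var n => exact absurd hc (by simp [MClosed])
  | app a b iha ihb =>
    simp only [good, Bool.and_eq_false_iff] at h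
    rcases h with (h | h) | h
    · obtain ⟨a', ha, hne⟩ := iha hc.1 h
      exact ⟨MTerm.app a' b, Step.left b ha, by simp [hne]⟩
    · obtain ⟨b', hb, hne⟩ := ihb hc.2 h
      exact ⟨MTerm.app a b', Step.right a hb, by simp [hne]⟩
    · simp only [decide_eq_false_iff_not, not_forall] at h
      obtain ⟨hab, hM⟩ := h
      subst hab
      exact ⟨MTerm.app MTerm.M a, Step.mock a, by simp [Ne.symm hM]⟩

theorem good_iff (t : MTerm) :
    good t = true ↔ MClosed t ∧ ∀ t', Step t' t → t' = t := by
  constructor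
  · exact fun h => ⟨good_closed h, fun t' hs => good_min hs h⟩
  · rintro ⟨hc, hmin⟩
    by_contra h
    obtain ⟨t', hs, hne⟩ := notgood_step hc (Bool.eq_false_iff.mpr (by simpa using h))
    exact hne (hmin t' hs)

/-- list of all minimal closed terms of degree d -/
def L : ℕ → List MTerm
  | 0 => [MTerm.M]
  | e + 1 =>
    (List.range (e + 1)).attach.flatMap fun i =>
      (L i.1).flatMap fun a =>
        ((L (e - i.1)).filter fun b => decide (a = b → a = MTerm.M)).map (MTerm.app a)
decreasing_by
  all_goals (have h := List.mem_range.mp i.2; omega)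

theorem mem_L : ∀ d t, t ∈ L d ↔ good t = true ∧ deg t = d := by
  intro d
  induction d using Nat.strong_induction_on with
  | _ d ih =>
    match d with
    | 0 =>
      intro t
      constructor
      · intro h
        simp only [L, List.mem_singleton] at h
        subst h; exact ⟨rfl, rfl⟩
      · rintro ⟨hg, hd⟩
        cases t with
        | M => simp [L]
        | var n => simp [good] at hg
        | app a b => simp [deg] at hd
    | e + 1 =>
      intro t
      rw [L]
      simp only [List.mem_flatMap, List.mem_attach, List.mem_map, List.mem_filter, true_and,
        Subtype.exists, List.mem_range]
      constructor
      · rintro ⟨i, hi, a, ha, b, ⟨hb, hp⟩, rfl⟩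
        rw [ih i hi] at ha
        rw [ih (e - i) (Nat.lt_succ_of_le (Nat.sub_le e i))] at hb
        refine ⟨?_, ?_⟩
        · simp only [good, Bool.and_eq_true]
          exact ⟨⟨ha.1, hb.1⟩, hp⟩
        · simp only [deg, ha.2, hb.2]
          omega
      · rintro ⟨hg, hd⟩
        cases t with
        | M => simp [deg] at hd
        | var n => simp [good] at hg
        | app a b =>
          simp only [good, Bool.and_eq_true] at hg
          simp only [deg] at hd
          refine ⟨deg a, by omega, a, ?_, b, ⟨?_, hg.2⟩, rfl⟩
          · rw [ih (deg a) (by omega)]; exact ⟨hg.1.1, rfl⟩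
          · rw [ih (e - deg a) (by omega)]
            exact ⟨hg.1.2, by omega⟩

theorem nodup_L : ∀ d, (L d).Nodup := by
  intro d
  induction d using Nat.strong_induction_on with
  | _ d ih =>
    match d with
    | 0 => simp [L]
    | e + 1 =>
      rw [L, List.nodup_flatMap]
      constructor
      · rintro ⟨i, hi⟩ -
        rw [List.nodup_flatMap]
        constructor
        · intro a ha
          refine List.Nodup.map ?_ (List.Nodup.filter _ (ih (e - i) (Nat.lt_succ_of_le (Nat.sub_le e i))))
          intro b b' h
          simpa using h
        · refine List.Pairwise.imp ?_ (ih i (List.mem_range.mp hi))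
          intro a a' hne t h1 h2
          simp only [List.mem_map, List.mem_filter] at h1 h2
          obtain ⟨b, _, rfl⟩ := h1
          obtain ⟨b', _, h⟩ := h2
          exact hne (by injection h.symm)
      · refine List.Pairwise.imp ?_ (List.nodup_range : (List.range (e+1)).Nodup).attach
        rintro ⟨i, hi⟩ ⟨j, hj⟩ hne t h1 h2
        have hij : i ≠ j := fun h => hne (by simpa using h)
        simp only [List.mem_flatMap, List.mem_map, List.mem_filter] at h1 h2
        obtain ⟨a, ha, b, _, rfl⟩ := h1
        obtain ⟨a', ha', b', _, h⟩ := h2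
        obtain ⟨rfl, rfl⟩ : a = a' ∧ b = b' := by
          constructor <;> injection h.symm
        rw [mem_L] at ha ha'
        exact hij (ha.2 ▸ ha'.2)

theorem filter_len {e i : ℕ} (he : 1 ≤ e) (hie : i ≤ e) {a : MTerm} (ha : a ∈ L i) :
    ((L (e - i)).filter fun b => decide (a = b → a = MTerm.M)).length
      = if 2 * i = e then (L i).length - 1 else (L (e - i)).length := by
  by_cases h2 : 2 * i = e
  · have hei : e - i = i := by omega
    have haM : a ≠ MTerm.M := by
      intro h; subst h
      have := ((mem_L i _).mp ha).2
      simp [deg] at this; omega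
    rw [hei, if_pos h2]
    have key := (List.length_eq_countP_add_countP (fun b => decide (a = b → a = MTerm.M)) : (L i).length = _)
    have hcount : List.countP
        (fun x => decide ¬(decide (a = x → a = MTerm.M) = true)) (L i) = 1 := by
      have heq : List.countP
          (fun x => decide ¬(decide (a = x → a = MTerm.M) = true)) (L i)
          = List.count a (L i) := by
        rw [List.count]
        refine List.countP_congr ?_
        intro b hb
        rcases eq_or_ne a b with rfl | hab
        · simp [haM]
        · simp [hab, Ne.symm hab]
      rw [heq]
      exact List.count_eq_one_of_mem (nodup_L i) ha
    rw [← List.countP_eq_length_filter]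
    omega
  · rw [if_neg h2, List.filter_eq_self.mpr]
    intro b hb
    have hda := ((mem_L i a).mp ha).2
    have hdb := ((mem_L _ b).mp hb).2
    simp only [decide_eq_true_eq]
    intro hab
    exfalso
    subst hab
    omega

theorem list_range_sum (n : ℕ) (f : ℕ → ℕ) :
    ((List.range n).map f).sum = ∑ i ∈ Finset.range n, f i := by
  simp [Finset.sum, Finset.range, Multiset.range]

theorem len_L (e : ℕ) (he : 1 ≤ e) :
    ((L (e + 1)).length : ℤ)
      = (∑ i ∈ Finset.range (e + 1), ((L i).length : ℤ) * ((L (e - i)).length : ℤ))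
        - (if e % 2 = 0 then ((L (e / 2)).length : ℤ) else 0) := by
  rw [L, List.length_flatMap]
  have h1 : List.map
      (List.length ∘ fun i : {x // x ∈ List.range (e+1)} =>
        (L i.1).flatMap fun a =>
          ((L (e - i.1)).filter fun b => decide (a = b → a = MTerm.M)).map (MTerm.app a))
      (List.range (e+1)).attach
      = List.map (fun i =>
          ((L i).flatMap fun a =>
            ((L (e - i)).filter fun b => decide (a = b → a = MTerm.M)).map (MTerm.app a)).length)
        (List.range (e+1)) := by
    rw [← List.attach_map_val (l := List.range (e+1)) (f := fun i =>
          ((L i).flatMap fun a =>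
            ((L (e - i)).filter fun b => decide (a = b → a = MTerm.M)).map (MTerm.app a)).length)]
    rfl
  simp only [Function.comp_def] at h1
  rw [h1, list_range_sum]
  have h2 : ∀ i ∈ Finset.range (e+1),
      (((L i).flatMap fun a =>
        ((L (e - i)).filter fun b => decide (a = b → a = MTerm.M)).map (MTerm.app a)).length : ℤ)
      = ((L i).length : ℤ) * ((L (e - i)).length : ℤ) -
          (if 2 * i = e then ((L i).length : ℤ) else 0) := by
    intro i hi
    have hie : i ≤ e := by simpa [Nat.lt_succ_iff] using hi
    rw [List.length_flatMap]
    have h3 : List.map (List.length ∘ fun a =>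
        ((L (e - i)).filter fun b => decide (a = b → a = MTerm.M)).map (MTerm.app a)) (L i)
        = List.map (fun _ => if 2 * i = e then (L i).length - 1 else (L (e - i)).length) (L i) := by
      refine List.map_congr_left ?_
      intro a ha
      simp only [Function.comp, List.length_map]
      exact filter_len he hie ha
    simp only [Function.comp_def] at h3
    rw [h3, List.map_const', List.sum_replicate, smul_eq_mul]
    by_cases h2i : 2 * i = e
    · rw [if_pos h2i, if_pos h2i]
      have hei : e - i = i := by omega
      rw [hei]
      rcases Nat.eq_zero_or_pos (L i).length with h0 | hpos
      · simp [h0]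
      · push_cast [Nat.mul_sub, Nat.mul_le_mul_left _ hpos]
        ring
    · rw [if_neg h2i, if_neg h2i]
      push_cast
      ring
  push_cast
  rw [Finset.sum_congr rfl h2, Finset.sum_sub_distrib]
  congr 1
  by_cases hpar : e % 2 = 0
  · rw [if_pos hpar]
    rw [Finset.sum_congr rfl (g := fun i => if i = e / 2 then ((L i).length : ℤ) else 0)
      (fun i hi => by
        congr 1
        simp only [eq_iff_iff]
        omega)]
    rw [Finset.sum_ite_eq' (Finset.range (e+1)) (e/2) (fun i => ((L i).length : ℤ))]
    rw [if_pos (Finset.mem_range.mpr (by omega))]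
  · rw [if_neg hpar]
    refine Finset.sum_eq_zero ?_
    intro i hi
    rw [if_neg (by omega)]

theorem set_eq (d : ℕ) :
    {t : MTerm | MClosed t ∧ deg t = d ∧ ∀ t', Step t' t → t' = t} = ↑(L d).toFinset := by
  ext t
  simp only [Set.mem_setOf_eq, Finset.coe_sort_coe, List.coe_toFinset, Set.mem_setOf_eq,
    List.mem_toFinset, Finset.mem_coe]
  rw [mem_L, good_iff]
  tauto

theorem ncard_eq (d : ℕ) :
    Set.ncard {t : MTerm | MClosed t ∧ deg t = d ∧ ∀ t', Step t' t → t' = t}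
      = (L d).length := by
  rw [set_eq, Set.ncard_coe_finset, List.toFinset_card_of_nodup (nodup_L d)]

theorem L_zero : L 0 = [MTerm.M] := by rw [L]

theorem L_one : L 1 = [MTerm.app MTerm.M MTerm.M] := by
  rw [L]
  have h : List.range 1 = [0] := rfl
  simp [h, L, List.attach, List.attachWith, List.pmap]

/-- recurrence for the number `b d` of closed minimal terms of degree `d`. -/
theorem count_minimal_closed_terms (b : ℕ → ℕ)
    (hb : ∀ d, b d =
      Set.ncard {t : MTerm | MClosed t ∧ deg t = d ∧ ∀ t', Step t' t → t' = t}) :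
    b 0 = 1 ∧ b 1 = 1 ∧
    ∀ d, 2 ≤ d →
      (b d : ℤ) = (∑ i ∈ Finset.range d, (b i : ℤ) * (b (d - 1 - i) : ℤ))
        - (if d % 2 = 1 then (b ((d - 1) / 2) : ℤ) else 0) := by
  have hb' : ∀ d, b d = (L d).length := fun d => (hb d).trans (ncard_eq d)
  refine ⟨by rw [hb' 0, L_zero]; rfl, by rw [hb' 1, L_one]; rfl, ?_⟩
  intro d hd
  obtain ⟨e, rfl⟩ : ∃ e, d = e + 1 := ⟨d - 1, by omega⟩
  have he : 1 ≤ e := by omega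
  rw [hb' (e+1), len_L e he]
  have hsum : ∀ i ∈ Finset.range (e+1),
      ((L i).length : ℤ) * ((L (e - i)).length : ℤ)
        = (b i : ℤ) * (b (e + 1 - 1 - i) : ℤ) := by
    intro i hi
    have h' : e + 1 - 1 - i = e - i := by omega
    rw [hb' i, h', hb' (e - i)]
  rw [Finset.sum_congr rfl hsum]
  congr 1
  have : (e + 1) % 2 = 1 ↔ e % 2 = 0 := by omega
  by_cases hpar : e % 2 = 0
  · have h' : (e + 1 - 1) / 2 = e / 2 := by omega
    rw [if_pos hpar, if_pos (this.mpr hpar), h', hb' (e / 2)]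
  · rw [if_neg hpar, if_neg (fun h => hpar (this.mp h))]
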